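/- arXiv:0811.4565 — 4 statements merged into one kernel-verified Lean document; each statement's English description precedes it below -/
import Mathlib

section
/- As z → 0⁺, E_1(z) + γ + ln z → 0, where E_1 is the exponential integral and γ is the Euler–Mascheroni constant; that is, E_1(z) = -γ - ln z + o(1) as z → 0⁺. -/
open MeasureTheory Real Filter

/-- The exponential integral `E_1(z) = ∫₁^∞ e^{-zt}/t dt` (for `z > 0`). -/
noncomputable def expInt (n : ℕ) (z : ℝ) : ℝ :=
  ∫ t in Set.Ioi (1 : ℝ), Real.exp (-z * t) * t ^ (-(n : ℝ))

namespace StmtTen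

open Set

/-- `e^{-u}/u` is integrable on `(z, ∞)` for `z > 0`. -/
lemma int_exp_inv {z : ℝ} (hz : 0 < z) :
    IntegrableOn (fun u : ℝ => Real.exp (-u) * u⁻¹) (Ioi z) := by
  have hg : IntegrableOn (fun u : ℝ => z⁻¹ * Real.exp (-u)) (Ioi z) := by
    have := exp_neg_integrableOn_Ioi z (one_pos (α := ℝ))
    simpa [IntegrableOn] using this.const_mul z⁻¹
  refine hg.mono' ?_ ?_
  · exact ((Real.measurable_exp.comp measurable_neg).mul measurable_inv).aestronglyMeasurable
  · filter_upwards [ae_restrict_mem measurableSet_Ioi] with u hu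
    have hu0 : 0 < u := hz.trans hu
    rw [Real.norm_eq_abs, abs_mul, abs_of_pos (Real.exp_pos _), abs_of_pos (inv_pos.2 hu0)]
    rw [mul_comm (z⁻¹)]
    exact mul_le_mul_of_nonneg_left (inv_anti₀ hz hu.le) (Real.exp_pos _).le

lemma abs_fA_le {u : ℝ} (hu : 0 < u) : |(Real.exp (-u) - 1) * u⁻¹| ≤ 1 := by
  have h1 : Real.exp (-u) ≤ 1 := Real.exp_le_one_iff.2 (by linarith)
  have h2 : 1 - u ≤ Real.exp (-u) := by
    have := Real.add_one_le_exp (-u); linarith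
  rw [abs_mul, abs_of_pos (inv_pos.2 hu), abs_of_nonpos (by linarith)]
  rw [neg_sub]
  calc (1 - Real.exp (-u)) * u⁻¹ ≤ u * u⁻¹ :=
        mul_le_mul_of_nonneg_right (by linarith) (inv_pos.2 hu).le
    _ = 1 := mul_inv_cancel₀ hu.ne'

/-- `(e^{-u}-1)/u` is integrable on `(0, 1]`. -/
lemma int_fA : IntegrableOn (fun u : ℝ => (Real.exp (-u) - 1) * u⁻¹) (Ioc (0:ℝ) 1) := by
  refine Integrable.mono' (g := fun _ => (1:ℝ)) ?_ ?_ ?_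
  · exact integrableOn_const (by simp)
  · exact (((Real.measurable_exp.comp measurable_neg).sub
      measurable_const).mul measurable_inv).aestronglyMeasurable
  · filter_upwards [ae_restrict_mem measurableSet_Ioc] with u hu
    exact abs_fA_le hu.1

/-- `log` is integrable on `(0, 1]`. -/
lemma int_log : IntegrableOn Real.log (Ioc (0:ℝ) 1) := by
  have hg : IntegrableOn (fun t : ℝ => 2 * t ^ (-(1/2) : ℝ)) (Ioc (0:ℝ) 1) := by
    have h := (intervalIntegral.intervalIntegrable_rpow' (a := 0) (b := 1)
      (r := -(1/2)) (by norm_num))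
    rw [intervalIntegrable_iff_integrableOn_Ioc_of_le zero_le_one] at h
    exact h.const_mul 2
  refine hg.mono' Real.measurable_log.aestronglyMeasurable ?_
  filter_upwards [ae_restrict_mem measurableSet_Ioc] with t ht
  have ht0 := ht.1
  have hlog : Real.log t ≤ 0 := Real.log_nonpos ht0.le ht.2
  rw [Real.norm_eq_abs, abs_of_nonpos hlog]
  have h1 : Real.log (t ^ (-(1/2) : ℝ)) ≤ t ^ (-(1/2) : ℝ) - 1 :=
    Real.log_le_sub_one_of_pos (Real.rpow_pos_of_pos ht0 _)
  rw [Real.log_rpow ht0] at h1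
  nlinarith [Real.rpow_pos_of_pos ht0 (-(1/2) : ℝ)]

/-- `e^{-t} log t` is integrable on `(0, 1]`. -/
lemma int_fL_Ioc : IntegrableOn (fun t : ℝ => Real.exp (-t) * Real.log t) (Ioc (0:ℝ) 1) := by
  refine Integrable.mono int_log ?_ ?_
  · exact ((Real.measurable_exp.comp measurable_neg).mul
      Real.measurable_log).aestronglyMeasurable
  · filter_upwards [ae_restrict_mem measurableSet_Ioc] with t ht
    rw [Real.norm_eq_abs, Real.norm_eq_abs, abs_mul, abs_of_pos (Real.exp_pos _)]
    have : Real.exp (-t) ≤ 1 := Real.exp_le_one_iff.2 (by linarith [ht.1])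
    nlinarith [abs_nonneg (Real.log t)]

/-- `e^{-t} log t` is integrable on `(1, ∞)`. -/
lemma int_fL_Ioi : IntegrableOn (fun t : ℝ => Real.exp (-t) * Real.log t) (Ioi (1:ℝ)) := by
  have hg : IntegrableOn (fun t : ℝ => Real.exp (-t) * t ^ ((2:ℝ) - 1)) (Ioi (1:ℝ)) :=
    (Real.GammaIntegral_convergent two_pos).mono_set (Ioi_subset_Ioi zero_le_one)
  refine hg.mono' ?_ ?_
  · exact ((Real.measurable_exp.comp measurable_neg).mul
      Real.measurable_log).aestronglyMeasurable
  · filter_upwards [ae_restrict_mem measurableSet_Ioi] with t ht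
    have ht0 : (0:ℝ) < t := zero_lt_one.trans ht
    have hlog : 0 ≤ Real.log t := Real.log_nonneg ht.le
    have hle : Real.log t ≤ t := (Real.log_le_sub_one_of_pos ht0).trans (by linarith)
    rw [Real.norm_eq_abs, abs_mul, abs_of_pos (Real.exp_pos _), abs_of_nonneg hlog,
      show (2:ℝ) - 1 = 1 by norm_num, Real.rpow_one]
    exact mul_le_mul_of_nonneg_left hle (Real.exp_pos _).le

/-- Integration by parts on `(1, ∞)`. -/
lemma IBP_Ioi :
    ∫ t in Ioi (1:ℝ), Real.exp (-t) * Real.log t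
      = ∫ t in Ioi (1:ℝ), Real.exp (-t) * t⁻¹ := by
  have hderiv : ∀ t ∈ Ioi (1:ℝ), HasDerivAt (fun t : ℝ => -(Real.exp (-t) * Real.log t))
      (Real.exp (-t) * Real.log t - Real.exp (-t) * t⁻¹) t := by
    intro t ht
    have ht0 : (0:ℝ) < t := zero_lt_one.trans ht
    have h1 : HasDerivAt (fun t : ℝ => Real.exp (-t)) (-Real.exp (-t)) t := by
      exact ((hasDerivAt_neg t).exp).congr_deriv (by ring)
    have h2 : HasDerivAt Real.log t⁻¹ t := Real.hasDerivAt_log ht0.ne'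
    have := (h1.mul h2).neg
    exact this.congr_deriv (by ring)
  have hint : IntegrableOn (fun t : ℝ =>
      Real.exp (-t) * Real.log t - Real.exp (-t) * t⁻¹) (Ioi (1:ℝ)) :=
    int_fL_Ioi.sub (int_exp_inv one_pos)
  have htend : Tendsto (fun t : ℝ => -(Real.exp (-t) * Real.log t)) atTop (nhds 0) := by
    have hb : ∀ᶠ t in (atTop : Filter ℝ),
        ‖-(Real.exp (-t) * Real.log t)‖ ≤ t * Real.exp (-t) := by
      filter_upwards [eventually_ge_atTop (1:ℝ)] with t ht
      have ht0 : (0:ℝ) < t := zero_lt_one.trans_le ht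
      have hlog : 0 ≤ Real.log t := Real.log_nonneg ht
      have hle : Real.log t ≤ t := (Real.log_le_sub_one_of_pos ht0).trans (by linarith)
      rw [norm_neg, Real.norm_eq_abs, abs_mul, abs_of_pos (Real.exp_pos _),
        abs_of_nonneg hlog]
      calc Real.exp (-t) * Real.log t ≤ Real.exp (-t) * t :=
            mul_le_mul_of_nonneg_left hle (Real.exp_pos _).le
        _ = t * Real.exp (-t) := mul_comm _ _
    exact squeeze_zero_norm' hb
      (by simpa using Real.tendsto_pow_mul_exp_neg_atTop_nhds_zero 1)
  have hcont : ContinuousWithinAt (fun t : ℝ => -(Real.exp (-t) * Real.log t)) (Ici 1) 1 :=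
    (((Real.continuous_exp.comp continuous_neg).continuousAt.mul
      (Real.continuousAt_log one_ne_zero)).neg).continuousWithinAt
  have h0 := integral_Ioi_of_hasDerivAt_of_tendsto hcont hderiv hint htend
  rw [integral_sub int_fL_Ioi (int_exp_inv one_pos)] at h0
  simp only [Real.log_one, mul_zero, neg_zero, sub_zero, zero_sub, neg_neg] at h0
  linarith

/-- Integration by parts on `(0, 1]`. -/
lemma IBP_Ioc :
    ∫ t in Ioc (0:ℝ) 1, Real.exp (-t) * Real.log t
      = ∫ u in Ioc (0:ℝ) 1, (Real.exp (-u) - 1) * u⁻¹ := by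
  set g : ℝ → ℝ := fun t => (1 - Real.exp (-t)) * Real.log t with hg
  have hg0 : g 0 = 0 := by simp [hg]
  have hg1 : g 1 = 0 := by simp [hg]
  have hcont : ContinuousOn g (Icc (0:ℝ) 1) := by
    intro x hx
    rcases eq_or_lt_of_le hx.1 with h0 | h0
    · -- continuity at 0
      rw [← h0]
      rw [← continuousWithinAt_diff_self, ContinuousWithinAt, hg0]
      have hsub : Icc (0:ℝ) 1 \ {0} ⊆ Ioi 0 := by
        rintro y ⟨hy1, hy2⟩
        exact lt_of_le_of_ne hy1.1 (Ne.symm (by simpa using hy2))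
      have hb : ∀ᶠ t in nhdsWithin (0:ℝ) (Icc 0 1 \ {0}),
          ‖g t‖ ≤ ‖Real.log t * t ^ (1:ℝ)‖ := by
        filter_upwards [self_mem_nhdsWithin] with t ht
        have ht0 : (0:ℝ) < t := hsub ht
        have h1 : Real.exp (-t) ≤ 1 := Real.exp_le_one_iff.2 (by linarith)
        have h2 : 1 - t ≤ Real.exp (-t) := by
          have := Real.add_one_le_exp (-t); linarith
        rw [Real.rpow_one, hg, Real.norm_eq_abs, Real.norm_eq_abs, abs_mul, abs_mul,
          mul_comm |Real.log t|]
        apply mul_le_mul_of_nonneg_right _ (abs_nonneg _)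
        rw [abs_of_nonneg (by linarith), abs_of_pos ht0]
        linarith
      refine squeeze_zero_norm' hb ?_
      have := tendsto_log_mul_rpow_nhdsGT_zero (one_pos (α := ℝ))
      have hmono : nhdsWithin (0:ℝ) (Icc 0 1 \ {0}) ≤ nhdsWithin 0 (Ioi 0) :=
        nhdsWithin_mono _ hsub
      simpa using (this.mono_left hmono).norm
    · -- continuity at x > 0
      exact (((continuous_const.sub
        (Real.continuous_exp.comp continuous_neg)).continuousAt.mul
        (Real.continuousAt_log h0.ne')).continuousWithinAt)
  have hderiv : ∀ t ∈ Ioo (0:ℝ) 1, HasDerivAt g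
      (Real.exp (-t) * Real.log t + (1 - Real.exp (-t)) * t⁻¹) t := by
    intro t ht
    have h1 : HasDerivAt (fun t : ℝ => 1 - Real.exp (-t)) (Real.exp (-t)) t := by
      have : HasDerivAt (fun t : ℝ => Real.exp (-t)) (-Real.exp (-t)) t := by
        exact ((hasDerivAt_neg t).exp).congr_deriv (by ring)
      simpa using (this.const_sub 1)
    have h2 : HasDerivAt Real.log t⁻¹ t := Real.hasDerivAt_log ht.1.ne'
    exact h1.mul h2
  have hintA : IntegrableOn (fun t : ℝ => (1 - Real.exp (-t)) * t⁻¹) (Ioc (0:ℝ) 1) := by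
    refine int_fA.neg.congr (ae_of_all _ fun t => ?_)
    simp only [Pi.neg_apply]
    ring
  have hint : IntervalIntegrable (fun t : ℝ =>
      Real.exp (-t) * Real.log t + (1 - Real.exp (-t)) * t⁻¹) volume 0 1 := by
    rw [intervalIntegrable_iff_integrableOn_Ioc_of_le zero_le_one]
    exact int_fL_Ioc.add hintA
  have h0 := intervalIntegral.integral_eq_sub_of_hasDerivAt_of_le zero_le_one hcont hderiv hint
  rw [hg0, hg1, sub_zero] at h0
  rw [intervalIntegral.integral_of_le zero_le_one] at h0
  rw [integral_add int_fL_Ioc hintA] at h0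
  have : ∫ t in Ioc (0:ℝ) 1, (1 - Real.exp (-t)) * t⁻¹
      = - ∫ u in Ioc (0:ℝ) 1, (Real.exp (-u) - 1) * u⁻¹ := by
    rw [← integral_neg]
    exact setIntegral_congr_fun measurableSet_Ioc (fun t _ => by ring)
  rw [this] at h0
  linarith

/-- `∫_0^∞ e^{-t} log t = -γ`. -/
lemma gamma_int :
    ∫ t in Ioi (0:ℝ), Real.exp (-t) * Real.log t = -Real.eulerMascheroniConstant := by
  have h1 := Complex.hasDerivAt_GammaIntegral (s := 1) (by norm_num)
  have heq : Complex.Gamma =ᶠ[nhds (1:ℂ)] Complex.GammaIntegral := by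
    have hopen : IsOpen {s : ℂ | 0 < s.re} := isOpen_lt continuous_const Complex.continuous_re
    filter_upwards [hopen.mem_nhds (by norm_num : (0:ℝ) < (1:ℂ).re)] with s hs
    exact Complex.Gamma_eq_integral hs
  have h2 : HasDerivAt Complex.Gamma
      (∫ t : ℝ in Ioi 0, (t : ℂ) ^ ((1:ℂ) - 1) * (Real.log t * Real.exp (-t))) 1 :=
    h1.congr_of_eventuallyEq heq
  have h3 := h2.unique Complex.hasDerivAt_Gamma_one
  have h4 : ∫ t : ℝ in Ioi 0, (t : ℂ) ^ ((1:ℂ) - 1) * (Real.log t * Real.exp (-t))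
      = ((∫ t in Ioi (0:ℝ), Real.exp (-t) * Real.log t : ℝ) : ℂ) := by
    have h5 : ∫ t : ℝ in Ioi 0, (t : ℂ) ^ ((1:ℂ) - 1) * (Real.log t * Real.exp (-t))
        = ∫ t : ℝ in Ioi 0, ((Real.exp (-t) * Real.log t : ℝ) : ℂ) := by
      refine setIntegral_congr_fun measurableSet_Ioi (fun t ht => ?_)
      rw [sub_self, Complex.cpow_zero, one_mul]
      push_cast
      ring
    rw [h5]
    exact integral_ofReal
  rw [h4] at h3
  exact_mod_cast h3

/-- The key constant identity. -/
lemma key_const :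
    (∫ u in Ioc (0:ℝ) 1, (Real.exp (-u) - 1) * u⁻¹)
      + ∫ t in Ioi (1:ℝ), Real.exp (-t) * t⁻¹ = -Real.eulerMascheroniConstant := by
  have hsplit : ∫ t in Ioi (0:ℝ), Real.exp (-t) * Real.log t
      = (∫ t in Ioc (0:ℝ) 1, Real.exp (-t) * Real.log t)
        + ∫ t in Ioi (1:ℝ), Real.exp (-t) * Real.log t := by
    rw [← setIntegral_union (Set.Ioc_disjoint_Ioi le_rfl) measurableSet_Ioi
      int_fL_Ioc int_fL_Ioi, Set.Ioc_union_Ioi_eq_Ioi zero_le_one]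
  rw [← IBP_Ioc, ← IBP_Ioi, ← hsplit, gamma_int]

/-- Change of variables: `E_1(z) = ∫_z^∞ e^{-u}/u du`. -/
lemma cov {z : ℝ} (hz : 0 < z) :
    expInt 1 z = ∫ u in Ioi z, Real.exp (-u) * u⁻¹ := by
  have h1 : expInt 1 z = ∫ t in Ioi (1:ℝ), Real.exp (-z * t) * t⁻¹ := by
    unfold expInt
    refine setIntegral_congr_fun measurableSet_Ioi (fun t ht => ?_)
    norm_num [Real.rpow_neg_one]
  have h2 := integral_comp_mul_left_Ioi (fun u => Real.exp (-u) * u⁻¹) 1 hz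
  simp only [smul_eq_mul, mul_one] at h2
  have h3 : ∫ t in Ioi (1:ℝ), Real.exp (-(z * t)) * (z * t)⁻¹
      = z⁻¹ * ∫ t in Ioi (1:ℝ), Real.exp (-z * t) * t⁻¹ := by
    rw [← integral_const_mul]
    refine setIntegral_congr_fun measurableSet_Ioi (fun t ht => ?_)
    rw [mul_inv]
    ring_nf
  rw [h3] at h2
  rw [h1]
  have hzne : z⁻¹ ≠ 0 := inv_ne_zero hz.ne'
  field_simp at h2 ⊢
  linarith [h2]

end StmtTen

/-- `E_1(z) = -γ - ln z + o(1)` as `z → 0⁺`, i.e.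
`E_1(z) + γ + ln z → 0` as `z → 0⁺`. -/
theorem stmt_10 :
    Filter.Tendsto (fun z : ℝ => expInt 1 z + Real.eulerMascheroniConstant + Real.log z)
      (nhdsWithin 0 (Set.Ioi 0)) (nhds 0) := by
  have key : ∀ z ∈ Set.Ioo (0:ℝ) 1,
      expInt 1 z + Real.eulerMascheroniConstant + Real.log z
        = -∫ u in Set.Ioc (0:ℝ) z, (Real.exp (-u) - 1) * u⁻¹ := by
    intro z hz
    obtain ⟨hz0, hz1⟩ := hz
    have hA0z : IntegrableOn (fun u : ℝ => (Real.exp (-u) - 1) * u⁻¹) (Set.Ioc 0 z) :=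
      StmtTen.int_fA.mono_set (Set.Ioc_subset_Ioc_right hz1.le)
    have hAz1 : IntegrableOn (fun u : ℝ => (Real.exp (-u) - 1) * u⁻¹) (Set.Ioc z 1) :=
      StmtTen.int_fA.mono_set (Set.Ioc_subset_Ioc_left hz0.le)
    have hI : IntegrableOn (fun u : ℝ => u⁻¹) (Set.Ioc z 1) := by
      have h := intervalIntegral.intervalIntegrable_inv (f := fun x : ℝ => x) (a := z) (b := 1) (μ := volume)
        (fun x hx => by
          have := hx.1
          rw [min_eq_left hz1.le] at this
          exact (hz0.trans_le this).ne') continuousOn_id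
      rwa [intervalIntegrable_iff_integrableOn_Ioc_of_le hz1.le] at h
    rw [StmtTen.cov hz0]
    have hs1 : ∫ u in Set.Ioi z, Real.exp (-u) * u⁻¹
        = (∫ u in Set.Ioc z 1, Real.exp (-u) * u⁻¹)
          + ∫ u in Set.Ioi (1:ℝ), Real.exp (-u) * u⁻¹ := by
      rw [← setIntegral_union (Set.Ioc_disjoint_Ioi le_rfl) measurableSet_Ioi
        ((StmtTen.int_exp_inv hz0).mono_set Set.Ioc_subset_Ioi_self)
        (StmtTen.int_exp_inv one_pos), Set.Ioc_union_Ioi_eq_Ioi hz1.le]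
    have hs2 : ∫ u in Set.Ioc z 1, Real.exp (-u) * u⁻¹
        = (∫ u in Set.Ioc z 1, (Real.exp (-u) - 1) * u⁻¹) + ∫ u in Set.Ioc z 1, u⁻¹ := by
      rw [← integral_add hAz1 hI]
      exact setIntegral_congr_fun measurableSet_Ioc (fun u _ => by ring)
    have hlog : ∫ u in Set.Ioc z 1, u⁻¹ = -Real.log z := by
      rw [← intervalIntegral.integral_of_le hz1.le, integral_inv (by
        rw [Set.uIcc_of_le hz1.le]
        rintro ⟨h1, -⟩
        exact absurd h1 (not_le.2 hz0))]
      rw [Real.log_div one_ne_zero hz0.ne', Real.log_one, zero_sub]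
    have hsplit01 : ∫ u in Set.Ioc (0:ℝ) 1, (Real.exp (-u) - 1) * u⁻¹
        = (∫ u in Set.Ioc (0:ℝ) z, (Real.exp (-u) - 1) * u⁻¹)
          + ∫ u in Set.Ioc z 1, (Real.exp (-u) - 1) * u⁻¹ := by
      rw [← setIntegral_union (Set.Ioc_disjoint_Ioc_of_le le_rfl) measurableSet_Ioc hA0z hAz1,
        Set.Ioc_union_Ioc_eq_Ioc hz0.le hz1.le]
    have hkey := StmtTen.key_const
    rw [hs1, hs2, hlog]
    linarith
  have hbound : ∀ z ∈ Set.Ioo (0:ℝ) 1,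
      ‖expInt 1 z + Real.eulerMascheroniConstant + Real.log z‖ ≤ z := by
    intro z hz
    rw [key z hz, norm_neg]
    have h := norm_setIntegral_le_of_norm_le_const (μ := volume)
      (s := Set.Ioc (0:ℝ) z) (C := 1)
      (by rw [Real.volume_Ioc]; exact ENNReal.ofReal_lt_top)
      (fun u hu => by
        rw [Real.norm_eq_abs]
        exact StmtTen.abs_fA_le hu.1)
    rw [Measure.real, Real.volume_Ioc, ENNReal.toReal_ofReal (by linarith [hz.1]), one_mul,
      sub_zero] at h
    exact h
  refine squeeze_zero_norm' (a := fun z : ℝ => z) ?_ ?_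
  · filter_upwards [Ioo_mem_nhdsGT_of_mem (Set.mem_Ico.2 ⟨le_refl 0, zero_lt_one⟩)]
      with z hz using hbound z hz
  · exact (continuous_id.tendsto 0).mono_left nhdsWithin_le_nhds
end

section
/- Fix ρ > 0 and n_r = 1. Then lim_{n_d → ∞} (1/2) log₂(1 + ρ n_d e^{(1+ρ)/α} E_{n_d+1}((1+ρ)/α)) = (1/2) log₂(1 + ρ), for any fixed α > 0. -/
open MeasureTheory Real Filter

section AuxExpInt
open Set

lemma integral_exp_neg_mul_Ioi (a : ℝ) {b : ℝ} (hb : 0 < b) :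
    ∫ x in Ioi a, Real.exp (-(b*x)) = Real.exp (-(b*a)) / b := by
  have := integral_comp_mul_left_Ioi (fun x => Real.exp (-x)) a hb
  simp only [smul_eq_mul] at this
  calc ∫ x in Ioi a, Real.exp (-(b*x)) = b⁻¹ * ∫ x in Ioi (b*a), Real.exp (-x) := this
    _ = Real.exp (-(b*a)) / b := by rw [integral_exp_neg_Ioi]; ring

lemma expInt_integrableOn {m : ℕ} (hm : 2 ≤ m) {z : ℝ} (hz : 0 < z) :
    IntegrableOn (fun t : ℝ => Real.exp (-z * t) * t ^ (-(m : ℝ))) (Ioi 1) := by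
  have hexp : (-(m:ℝ)) < -1 := by
    have : (1:ℝ) < m := by exact_mod_cast hm.trans_lt' one_lt_two
    linarith
  have hg : IntegrableOn (fun t : ℝ => t ^ (-(m : ℝ))) (Ioi 1) :=
    integrableOn_Ioi_rpow_of_lt hexp one_pos
  refine Integrable.mono' hg ?_ ?_
  · refine (ContinuousOn.mul ?_ ?_).aestronglyMeasurable measurableSet_Ioi
    · exact (Real.continuous_exp.comp (continuous_const.mul continuous_id)).continuousOn
    · intro x hx
      have hx1 : (1:ℝ) < x := hx
      exact (Real.continuousAt_rpow_const x _ (Or.inl (by linarith))).continuousWithinAt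
  · filter_upwards [ae_restrict_mem measurableSet_Ioi] with t ht
    have ht1 : (1:ℝ) < t := ht
    have h1 : Real.exp (-z * t) ≤ 1 := by
      rw [Real.exp_le_one_iff]; nlinarith
    have h2 : (0:ℝ) ≤ t ^ (-(m:ℝ)) := Real.rpow_nonneg (by linarith) _
    rw [norm_mul, Real.norm_eq_abs, Real.norm_eq_abs, abs_of_pos (Real.exp_pos _),
      abs_of_nonneg h2]
    nlinarith

lemma expInt_le {m : ℕ} (hm : 2 ≤ m) {z : ℝ} (hz : 0 < z) :
    expInt m z ≤ Real.exp (-z) / ((m:ℝ) - 1) := by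
  have hm1 : (1:ℝ) < m := by exact_mod_cast hm.trans_lt' one_lt_two
  have hexp : (-(m:ℝ)) < -1 := by linarith
  have hg : IntegrableOn (fun t : ℝ => Real.exp (-z) * t ^ (-(m : ℝ))) (Ioi 1) :=
    (integrableOn_Ioi_rpow_of_lt hexp one_pos).const_mul _
  have h1 : expInt m z ≤ ∫ t in Ioi (1:ℝ), Real.exp (-z) * t ^ (-(m:ℝ)) := by
    refine setIntegral_mono_on (expInt_integrableOn hm hz) hg measurableSet_Ioi ?_
    intro t ht
    have ht1 : (1:ℝ) < t := ht
    have h2 : (0:ℝ) ≤ t ^ (-(m:ℝ)) := Real.rpow_nonneg (by linarith) _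
    have : Real.exp (-z * t) ≤ Real.exp (-z) := by
      apply Real.exp_le_exp.2; nlinarith
    nlinarith
  have h2 : ∫ t in Ioi (1:ℝ), Real.exp (-z) * t ^ (-(m:ℝ))
      = Real.exp (-z) / ((m:ℝ) - 1) := by
    rw [integral_const_mul, integral_Ioi_rpow_of_lt hexp one_pos, Real.one_rpow]
    have hne : -(m:ℝ)+1 ≠ 0 := by linarith
    have hne2 : (m:ℝ)-1 ≠ 0 := by linarith
    field_simp
    ring
  exact h2 ▸ h1

lemma le_expInt {m : ℕ} (hm : 2 ≤ m) {z : ℝ} (hz : 0 < z) :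
    Real.exp (-z) / (z + m) ≤ expInt m z := by
  have hzm : 0 < z + m := by positivity
  have hf : IntegrableOn (fun t : ℝ => Real.exp (m:ℝ) * Real.exp (-((z+m)*t))) (Ioi 1) := by
    refine Integrable.const_mul ?_ _
    have := exp_neg_integrableOn_Ioi 1 hzm
    apply this.congr_fun ?_ measurableSet_Ioi
    intro t _; ring_nf
  have h1 : ∫ t in Ioi (1:ℝ), Real.exp (m:ℝ) * Real.exp (-((z+m)*t)) ≤ expInt m z := by
    refine setIntegral_mono_on hf (expInt_integrableOn hm hz) measurableSet_Ioi ?_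
    intro t ht
    have ht1 : (1:ℝ) < t := ht
    have ht0 : (0:ℝ) < t := by linarith
    rw [Real.rpow_def_of_pos ht0, ← Real.exp_add, ← Real.exp_add]
    apply Real.exp_le_exp.2
    have hlog : Real.log t ≤ t - 1 := Real.log_le_sub_one_of_pos ht0
    have hm0 : (0:ℝ) ≤ m := Nat.cast_nonneg m
    nlinarith
  have h2 : ∫ t in Ioi (1:ℝ), Real.exp (m:ℝ) * Real.exp (-((z+m)*t))
      = Real.exp (-z) / (z + m) := by
    rw [integral_const_mul, integral_exp_neg_mul_Ioi 1 hzm, mul_one]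
    rw [mul_div_assoc', ← Real.exp_add]
    ring_nf
  exact h2 ▸ h1

end AuxExpInt

/-- for fixed `ρ, α > 0` (single relay antenna `n_r = 1`),
the capacity upper bound tends to `(1/2) log₂(1+ρ)` as `n_d → ∞`. -/
theorem stmt_13 (ρ α : ℝ) (hρ : 0 < ρ) (hα : 0 < α) :
    Filter.Tendsto
      (fun nd : ℕ => (1 / 2) * Real.logb 2
        (1 + ρ * nd * Real.exp ((1 + ρ) / α) * expInt (nd + 1) ((1 + ρ) / α)))
      Filter.atTop (nhds ((1 / 2) * Real.logb 2 (1 + ρ))) := by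
  set c : ℝ := (1 + ρ) / α with hc_def
  have hc : 0 < c := by positivity
  set f : ℕ → ℝ := fun nd => ρ * nd * Real.exp c * expInt (nd + 1) c with hf_def
  have h_up : ∀ nd : ℕ, 1 ≤ nd → f nd ≤ ρ := by
    intro nd hnd
    have hm : 2 ≤ nd + 1 := by omega
    have h := expInt_le hm hc
    have hnd1 : (1:ℝ) ≤ nd := by exact_mod_cast hnd
    have hcast : ((nd + 1 : ℕ) : ℝ) - 1 = (nd : ℝ) := by push_cast; ring
    rw [hcast] at h
    have hpos : (0:ℝ) < ρ * nd * Real.exp c := by positivity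
    calc f nd ≤ ρ * nd * Real.exp c * (Real.exp (-c) / nd) := by
          exact mul_le_mul_of_nonneg_left h (le_of_lt hpos)
      _ = ρ * (Real.exp c * Real.exp (-c)) * (nd / nd) := by ring
      _ = ρ := by
          rw [← Real.exp_add, div_self (by linarith : (nd:ℝ) ≠ 0)]
          simp
  have h_lo : ∀ nd : ℕ, 1 ≤ nd → ρ * nd / ((nd:ℝ) + (c + 1)) ≤ f nd := by
    intro nd hnd
    have hm : 2 ≤ nd + 1 := by omega
    have h := le_expInt hm hc
    have hcast : c + ((nd + 1 : ℕ) : ℝ) = (nd:ℝ) + (c + 1) := by push_cast; ring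
    rw [hcast] at h
    have hpos : (0:ℝ) ≤ ρ * nd * Real.exp c := by positivity
    have hee : Real.exp c * Real.exp (-c) = 1 := by rw [← Real.exp_add]; simp
    calc ρ * nd / ((nd:ℝ) + (c + 1))
        = ρ * nd * (Real.exp c * Real.exp (-c)) / ((nd:ℝ) + (c+1)) := by
          rw [hee, mul_one]
      _ = ρ * nd * Real.exp c * (Real.exp (-c) / ((nd:ℝ) + (c+1))) := by ring
      _ ≤ f nd := mul_le_mul_of_nonneg_left h hpos
  have htlo : Tendsto (fun nd : ℕ => ρ * nd / ((nd:ℝ) + (c + 1))) atTop (nhds ρ) := by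
    have h1 := tendsto_natCast_div_add_atTop (𝕜 := ℝ) (c + 1)
    have h2 := h1.const_mul ρ
    rw [mul_one] at h2
    refine h2.congr fun nd => by ring
  have hf : Tendsto f atTop (nhds ρ) := by
    refine tendsto_of_tendsto_of_tendsto_of_le_of_le' htlo tendsto_const_nhds ?_ ?_
    · filter_upwards [eventually_ge_atTop 1] with nd hnd using h_lo nd hnd
    · filter_upwards [eventually_ge_atTop 1] with nd hnd using h_up nd hnd
  have hcont : ContinuousAt (fun x : ℝ => (1/2) * Real.logb 2 (1 + x)) ρ := by
    simp only [Real.logb]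
    exact continuousAt_const.mul
      (((Real.continuousAt_log (by show (1:ℝ) + ρ ≠ 0; positivity)).comp
        (continuousAt_const.add continuousAt_id)).div_const _)
  exact hcont.tendsto.comp hf
end

section
/- For a > 0 and integer c ≥ 1, ∫₀^∞ t^{c-1} e^{-t} ln(1 + at) dt = Γ(c) e^{1/a} ∑_{l=0}^{c-1} E_{l+1}(1/a), where E_n is the exponential integral of order n. -/
open MeasureTheory Real

open Set Filter

lemma intOn_pow_exp (k : ℕ) :
    IntegrableOn (fun t : ℝ => t ^ k * Real.exp (-t)) (Set.Ioi 0) := by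
  have h := Real.GammaIntegral_convergent (s := (k : ℝ) + 1) (by positivity)
  refine h.congr_fun (fun x hx => ?_) measurableSet_Ioi
  dsimp only
  rw [add_sub_cancel_right, Real.rpow_natCast, mul_comm]

lemma integral_pow_exp (k : ℕ) :
    ∫ t in Set.Ioi (0 : ℝ), t ^ k * Real.exp (-t) = (k.factorial : ℝ) := by
  have h := Real.Gamma_eq_integral (s := (k : ℝ) + 1) (by positivity)
  rw [← Real.Gamma_nat_eq_factorial k]
  push_cast
  rw [h]
  · apply setIntegral_congr_fun measurableSet_Ioi
    intro x hx
    simp only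
    rw [add_sub_cancel_right, Real.rpow_natCast, mul_comm]

lemma intOn_log {a : ℝ} (ha : 0 < a) (k : ℕ) :
    IntegrableOn (fun t : ℝ => t ^ k * Real.exp (-t) * Real.log (1 + a * t))
      (Set.Ioi 0) := by
  refine Integrable.mono ((intOn_pow_exp (k + 1)).const_mul a) ?_ ?_
  · apply ContinuousOn.aestronglyMeasurable ?_ measurableSet_Ioi
    apply ((continuous_pow k).continuousOn.mul (Real.continuous_exp.comp continuous_neg).continuousOn).mul
    apply ContinuousOn.log
    · exact (continuous_const.add (continuous_const.mul continuous_id)).continuousOn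
    · intro x hx
      have : (0:ℝ) < x := hx
      positivity
  · rw [ae_restrict_iff' measurableSet_Ioi]
    filter_upwards with t ht
    have ht' : (0:ℝ) < t := ht
    have h1 : (0:ℝ) < 1 + a * t := by positivity
    have hlog0 : 0 ≤ Real.log (1 + a * t) := Real.log_nonneg (by nlinarith)
    have hlog : Real.log (1 + a * t) ≤ a * t :=
      (Real.log_le_sub_one_of_pos h1).trans (by ring_nf; exact le_refl _)
    rw [Real.norm_eq_abs, Real.norm_eq_abs, abs_of_nonneg (by positivity),
      abs_of_nonneg (by positivity)]
    calc t ^ k * Real.exp (-t) * Real.log (1 + a * t)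
        ≤ t ^ k * Real.exp (-t) * (a * t) := by
          apply mul_le_mul_of_nonneg_left hlog (by positivity)
      _ = a * (t ^ (k + 1) * Real.exp (-t)) := by ring

lemma intOn_frac {a : ℝ} (ha : 0 < a) (k : ℕ) :
    IntegrableOn (fun t : ℝ => t ^ k * Real.exp (-t) * (a / (1 + a * t)))
      (Set.Ioi 0) := by
  refine Integrable.mono ((intOn_pow_exp k).const_mul a) ?_ ?_
  · apply ContinuousOn.aestronglyMeasurable ?_ measurableSet_Ioi
    apply ((continuous_pow k).continuousOn.mul (Real.continuous_exp.comp continuous_neg).continuousOn).mul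
    apply ContinuousOn.div continuous_const.continuousOn
      (continuous_const.add (continuous_const.mul continuous_id)).continuousOn
    intro x hx
    have : (0:ℝ) < x := hx
    show 1 + a * x ≠ 0
    positivity
  · rw [ae_restrict_iff' measurableSet_Ioi]
    filter_upwards with t ht
    have ht' : (0:ℝ) < t := ht
    have h1 : (0:ℝ) < 1 + a * t := by positivity
    have hle : a / (1 + a * t) ≤ a := by
      rw [div_le_iff₀ h1]; nlinarith [mul_pos ha (mul_pos ha ht')]
    rw [Real.norm_eq_abs, Real.norm_eq_abs, abs_of_nonneg (by positivity),
      abs_of_nonneg (by positivity)]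
    calc t ^ k * Real.exp (-t) * (a / (1 + a * t))
        ≤ t ^ k * Real.exp (-t) * a := by
          apply mul_le_mul_of_nonneg_left hle (by positivity)
      _ = a * (t ^ k * Real.exp (-t)) := by ring

lemma intOn_E (n : ℕ) {z : ℝ} (hz : 0 < z) :
    IntegrableOn (fun t : ℝ => Real.exp (-z * t) * t ^ (-(n : ℝ))) (Set.Ioi 1) := by
  have hind : IntegrableOn (fun t : ℝ => Real.exp (-z * t)) (Set.Ioi 1) :=
    exp_neg_integrableOn_Ioi 1 hz
  refine Integrable.mono hind ?_ ?_
  · apply ContinuousOn.aestronglyMeasurable ?_ measurableSet_Ioi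
    apply (Real.continuous_exp.comp (continuous_const.mul continuous_id)).continuousOn.mul
    apply ContinuousOn.rpow_const continuous_id.continuousOn
    intro x hx
    exact Or.inl (by intro h; subst h; exact absurd hx (by norm_num))
  · rw [ae_restrict_iff' measurableSet_Ioi]
    filter_upwards with t ht
    have ht' : (1:ℝ) < t := ht
    have h0 : (0:ℝ) < t := by linarith
    rw [Real.norm_eq_abs, Real.norm_eq_abs, abs_of_nonneg (by positivity),
      abs_of_nonneg (Real.exp_nonneg _)]
    have : t ^ (-(n : ℝ)) ≤ 1 :=
      Real.rpow_le_one_of_one_le_of_nonpos ht'.le (by simp)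
    nlinarith [Real.exp_nonneg (-z * t)]

lemma expInt_rec (n : ℕ) {z : ℝ} (hz : 0 < z) :
    z * expInt n z + n * expInt (n + 1) z = Real.exp (-z) := by
  have hI1 : IntegrableOn (fun t : ℝ => -z * (Real.exp (-z * t) * t ^ (-(n:ℝ))))
      (Set.Ioi 1) := (intOn_E n hz).const_mul _
  have hI2 : IntegrableOn (fun t : ℝ => (-(n:ℝ)) * (Real.exp (-z * t) * t ^ (-((n:ℝ)+1))))
      (Set.Ioi 1) := by
    refine IntegrableOn.congr_fun ((intOn_E (n+1) hz).const_mul (-(n:ℝ)))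
      (fun x hx => ?_) measurableSet_Ioi
    push_cast
    ring_nf
  have key : ∫ t in Set.Ioi (1:ℝ),
      (-z * (Real.exp (-z * t) * t ^ (-(n:ℝ))) +
        (-(n:ℝ)) * (Real.exp (-z * t) * t ^ (-((n:ℝ)+1)))) =
        0 - Real.exp (-z * 1) * (1:ℝ) ^ (-(n:ℝ)) := by
    refine integral_Ioi_of_hasDerivAt_of_tendsto
      (f := fun t => Real.exp (-z * t) * t ^ (-(n:ℝ))) ?_ ?_ (hI1.add hI2) ?_
    · apply ContinuousAt.continuousWithinAt
      apply ContinuousAt.mul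
      · exact (Real.continuous_exp.comp (continuous_const.mul continuous_id)).continuousAt
      · exact Real.continuousAt_rpow_const 1 _ (Or.inl one_ne_zero)
    · intro t ht
      have ht' : (1:ℝ) < t := ht
      have h0 : t ≠ 0 := by linarith
      have hexp : HasDerivAt (fun t : ℝ => Real.exp (-z * t)) (Real.exp (-z * t) * (-z)) t := by
        have : HasDerivAt (fun t : ℝ => -z * t) (-z) t := by
          simpa using (hasDerivAt_id t).const_mul (-z)
        exact this.exp
      have hrpow : HasDerivAt (fun t : ℝ => t ^ (-(n:ℝ)))
          ((-(n:ℝ)) * t ^ (-(n:ℝ) - 1)) t :=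
        Real.hasDerivAt_rpow_const (Or.inl h0)
      have := hexp.fun_mul hrpow
      refine this.congr_deriv ?_
      rw [show (-((n:ℝ)+1)) = -(n:ℝ) - 1 by ring]
      ring
    · have h2 : Filter.Tendsto (fun t : ℝ => Real.exp (-z * t)) Filter.atTop (nhds 0) := by
        have := Real.tendsto_exp_neg_atTop_nhds_zero.comp
          (Filter.Tendsto.const_mul_atTop hz Filter.tendsto_id)
        refine this.congr fun t => ?_
        simp [Function.comp, neg_mul]
      apply squeeze_zero' (g := fun t => Real.exp (-z * t))
      · filter_upwards [Filter.eventually_ge_atTop (1:ℝ)] with t ht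
        have : (0:ℝ) < t := by linarith
        positivity
      · filter_upwards [Filter.eventually_ge_atTop (1:ℝ)] with t ht
        have h0 : (0:ℝ) < t := by linarith
        have : t ^ (-(n:ℝ)) ≤ 1 := Real.rpow_le_one_of_one_le_of_nonpos ht (by simp)
        nlinarith [Real.exp_nonneg (-z * t)]
      · exact h2
  rw [integral_add hI1 hI2, integral_const_mul, integral_const_mul] at key
  have e2 : ∫ t in Set.Ioi (1:ℝ), Real.exp (-z * t) * t ^ (-((n:ℝ)+1))
      = expInt (n+1) z := by
    unfold expInt
    apply setIntegral_congr_fun measurableSet_Ioi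
    intro x hx
    push_cast
    ring_nf
  rw [e2,
    show (∫ t in Set.Ioi (1:ℝ), Real.exp (-z * t) * t ^ (-(n:ℝ))) = expInt n z from rfl]
    at key
  norm_num at key
  linarith

lemma image_affine {a : ℝ} (ha : 0 < a) :
    (fun t : ℝ => 1 + a * t) '' Set.Ioi 0 = Set.Ioi 1 := by
  ext u
  constructor
  · rintro ⟨t, ht, rfl⟩
    have : (0:ℝ) < t := ht
    have : 0 < a * t := by positivity
    simpa using this
  · intro hu
    have hu' : (1:ℝ) < u := hu
    refine ⟨(u - 1) / a, ?_, ?_⟩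
    · have hu1 : 0 < u - 1 := by linarith
      have : 0 < (u - 1) / a := by positivity
      simpa using this
    · field_simp
      ring

lemma J_zero {a : ℝ} (ha : 0 < a) :
    ∫ t in Set.Ioi (0:ℝ), Real.exp (-t) * (a / (1 + a * t))
      = Real.exp (1 / a) * expInt 1 (1 / a) := by
  have hderiv : ∀ x ∈ Set.Ioi (0:ℝ),
      HasDerivWithinAt (fun t : ℝ => 1 + a * t) a (Set.Ioi 0) x := by
    intro x hx
    have : HasDerivAt (fun t : ℝ => 1 + a * t) a x := by
      simpa using ((hasDerivAt_id x).const_mul a).const_add (1:ℝ)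
    exact this.hasDerivWithinAt
  have hinj : Set.InjOn (fun t : ℝ => 1 + a * t) (Set.Ioi 0) := by
    intro x _ y _ h
    simp only at h
    have := ha.ne'
    nlinarith [h]
  have key := integral_image_eq_integral_abs_deriv_smul measurableSet_Ioi hderiv hinj
    (fun u => Real.exp (-(1/a) * u) * u ^ (-(1:ℝ)))
  rw [image_affine ha] at key
  have : expInt 1 (1/a) = ∫ t in Set.Ioi (0:ℝ),
      |a| • (Real.exp (-(1/a) * (1 + a * t)) * (1 + a * t) ^ (-(1:ℝ))) := by
    rw [expInt]
    simpa using key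
  rw [this, ← integral_const_mul]
  apply setIntegral_congr_fun measurableSet_Ioi
  intro t ht
  have ht' : (0:ℝ) < t := ht
  have h1 : (0:ℝ) < 1 + a * t := by positivity
  simp only [smul_eq_mul, Real.rpow_neg_one, abs_of_pos ha]
  rw [show -(1/a) * (1 + a * t) = -t - 1/a by field_simp; ring, Real.exp_sub]
  field_simp

lemma J_eq {a : ℝ} (ha : 0 < a) (k : ℕ) :
    ∫ t in Set.Ioi (0:ℝ), t ^ k * Real.exp (-t) * (a / (1 + a * t))
      = (k.factorial : ℝ) * Real.exp (1/a) * expInt (k+1) (1/a) := by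
  induction k with
  | zero => simpa using J_zero ha
  | succ k ih =>
    have hsplit : ∀ t ∈ Set.Ioi (0:ℝ),
        t ^ (k+1) * Real.exp (-t) * (a / (1 + a * t))
          = t ^ k * Real.exp (-t)
            - (1/a) * (t ^ k * Real.exp (-t) * (a / (1 + a * t))) := by
      intro t ht
      have ht' : (0:ℝ) < t := ht
      have h1 : (0:ℝ) < 1 + a * t := by positivity
      field_simp
      ring
    rw [setIntegral_congr_fun measurableSet_Ioi hsplit,
      integral_sub (intOn_pow_exp k) ((intOn_frac ha k).const_mul (1/a)),
      integral_const_mul, integral_pow_exp, ih]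
    have hrec := expInt_rec (k+1) (z := 1/a) (by positivity)
    have hmul : Real.exp (1/a) * Real.exp (-(1/a)) = 1 := by
      rw [← Real.exp_add]; simp
    push_cast [Nat.factorial_succ] at hrec ⊢
    linear_combination (-(k.factorial:ℝ) * Real.exp (1/a)) * hrec
      - (k.factorial:ℝ) * hmul

lemma I_base {a : ℝ} (ha : 0 < a) :
    ∫ t in Set.Ioi (0:ℝ), Real.exp (-t) * Real.log (1 + a * t)
      = ∫ t in Set.Ioi (0:ℝ), Real.exp (-t) * (a / (1 + a * t)) := by
  have hL : IntegrableOn (fun t : ℝ => Real.exp (-t) * Real.log (1 + a * t))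
      (Set.Ioi 0) :=
    (intOn_log ha 0).congr_fun (fun x hx => by simp) measurableSet_Ioi
  have hF : IntegrableOn (fun t : ℝ => Real.exp (-t) * (a / (1 + a * t)))
      (Set.Ioi 0) :=
    (intOn_frac ha 0).congr_fun (fun x hx => by simp) measurableSet_Ioi
  have key : ∫ t in Set.Ioi (0:ℝ),
      (Real.exp (-t) * (a / (1 + a * t)) - Real.exp (-t) * Real.log (1 + a * t))
      = 0 - Real.exp (-(0:ℝ)) * Real.log (1 + a * 0) := by
    refine integral_Ioi_of_hasDerivAt_of_tendsto
      (f := fun t => Real.exp (-t) * Real.log (1 + a * t)) ?_ ?_ (hF.sub hL) ?_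
    · apply ContinuousAt.continuousWithinAt
      apply ContinuousAt.mul
      · exact (Real.continuous_exp.comp continuous_neg).continuousAt
      · apply ContinuousAt.log
        · exact (continuous_const.add (continuous_const.mul continuous_id)).continuousAt
        · norm_num
    · intro t ht
      have ht' : (0:ℝ) < t := ht
      have h1 : (0:ℝ) < 1 + a * t := by positivity
      have hexp : HasDerivAt (fun t : ℝ => Real.exp (-t)) (Real.exp (-t) * (-1)) t :=
        (hasDerivAt_neg t).exp
      have hin : HasDerivAt (fun t : ℝ => 1 + a * t) a t := by
        simpa using ((hasDerivAt_id t).const_mul a).const_add (1:ℝ)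
      have hlog : HasDerivAt (fun t : ℝ => Real.log (1 + a * t)) (a / (1 + a * t)) t :=
        hin.log h1.ne'
      have := hexp.fun_mul hlog
      refine this.congr_deriv ?_
      ring
    · have hg : Filter.Tendsto (fun t : ℝ => a * (t ^ 1 * Real.exp (-t)))
          Filter.atTop (nhds 0) := by
        simpa using (tendsto_pow_mul_exp_neg_atTop_nhds_zero 1).const_mul a
      apply squeeze_zero' (g := fun t => a * (t ^ 1 * Real.exp (-t))) ?_ ?_ hg
      · filter_upwards [Filter.eventually_ge_atTop (0:ℝ)] with t ht
        have h1 : (0:ℝ) < 1 + a * t := by positivity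
        have hlog0 : 0 ≤ Real.log (1 + a * t) := Real.log_nonneg (by nlinarith)
        positivity
      · filter_upwards [Filter.eventually_ge_atTop (0:ℝ)] with t ht
        have h1 : (0:ℝ) < 1 + a * t := by positivity
        have hlog : Real.log (1 + a * t) ≤ a * t :=
          (Real.log_le_sub_one_of_pos h1).trans (by ring_nf; exact le_refl _)
        have := Real.exp_nonneg (-t)
        nlinarith
  rw [integral_sub hF hL] at key
  norm_num at key
  linarith

lemma I_step {a : ℝ} (ha : 0 < a) (k : ℕ) :
    ∫ t in Set.Ioi (0:ℝ), t ^ (k+1) * Real.exp (-t) * Real.log (1 + a * t)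
      = (k+1) * (∫ t in Set.Ioi (0:ℝ), t ^ k * Real.exp (-t) * Real.log (1 + a * t))
        + ∫ t in Set.Ioi (0:ℝ), t ^ (k+1) * Real.exp (-t) * (a / (1 + a * t)) := by
  have hIk : IntegrableOn
      (fun t : ℝ => ((k:ℝ)+1) * (t ^ k * Real.exp (-t) * Real.log (1 + a * t)))
      (Set.Ioi 0) := (intOn_log ha k).const_mul _
  have hJ := intOn_frac ha (k+1)
  have hI := intOn_log ha (k+1)
  have key : ∫ t in Set.Ioi (0:ℝ),
      (((k:ℝ)+1) * (t ^ k * Real.exp (-t) * Real.log (1 + a * t))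
        + t ^ (k+1) * Real.exp (-t) * (a / (1 + a * t))
        - t ^ (k+1) * Real.exp (-t) * Real.log (1 + a * t))
      = 0 - (0:ℝ) ^ (k+1) * Real.exp (-(0:ℝ)) * Real.log (1 + a * 0) := by
    refine integral_Ioi_of_hasDerivAt_of_tendsto
      (f := fun t => t ^ (k+1) * Real.exp (-t) * Real.log (1 + a * t)) ?_ ?_
      ((hIk.add hJ).sub hI) ?_
    · apply ContinuousAt.continuousWithinAt
      apply ContinuousAt.mul
      · exact ((continuous_pow (k+1)).mul
          (Real.continuous_exp.comp continuous_neg)).continuousAt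
      · apply ContinuousAt.log
        · exact (continuous_const.add (continuous_const.mul continuous_id)).continuousAt
        · norm_num
    · intro t ht
      have ht' : (0:ℝ) < t := ht
      have h1 : (0:ℝ) < 1 + a * t := by positivity
      have hpow : HasDerivAt (fun t : ℝ => t ^ (k+1)) (((k:ℝ)+1) * t ^ k) t := by
        simpa using hasDerivAt_pow (k+1) t
      have hexp : HasDerivAt (fun t : ℝ => Real.exp (-t)) (Real.exp (-t) * (-1)) t :=
        (hasDerivAt_neg t).exp
      have hin : HasDerivAt (fun t : ℝ => 1 + a * t) a t := by
        simpa using ((hasDerivAt_id t).const_mul a).const_add (1:ℝ)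
      have hlog : HasDerivAt (fun t : ℝ => Real.log (1 + a * t)) (a / (1 + a * t)) t :=
        hin.log h1.ne'
      have := (hpow.fun_mul hexp).fun_mul hlog
      refine this.congr_deriv ?_
      ring
    · have hg : Filter.Tendsto (fun t : ℝ => a * (t ^ (k+2) * Real.exp (-t)))
          Filter.atTop (nhds 0) := by
        simpa using (tendsto_pow_mul_exp_neg_atTop_nhds_zero (k+2)).const_mul a
      apply squeeze_zero' (g := fun t => a * (t ^ (k+2) * Real.exp (-t))) ?_ ?_ hg
      · filter_upwards [Filter.eventually_ge_atTop (0:ℝ)] with t ht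
        have h1 : (0:ℝ) < 1 + a * t := by positivity
        have hlog0 : 0 ≤ Real.log (1 + a * t) := Real.log_nonneg (by nlinarith)
        positivity
      · filter_upwards [Filter.eventually_ge_atTop (0:ℝ)] with t ht
        have h1 : (0:ℝ) < 1 + a * t := by positivity
        have hlog : Real.log (1 + a * t) ≤ a * t :=
          (Real.log_le_sub_one_of_pos h1).trans (by ring_nf; exact le_refl _)
        have he := Real.exp_nonneg (-t)
        have hp : (0:ℝ) ≤ t ^ k := by positivity
        have hlog0 : 0 ≤ Real.log (1 + a * t) := Real.log_nonneg (by nlinarith)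
        calc t ^ (k+1) * Real.exp (-t) * Real.log (1 + a * t)
            ≤ t ^ (k+1) * Real.exp (-t) * (a * t) := by
              apply mul_le_mul_of_nonneg_left hlog (by positivity)
          _ = a * (t ^ (k+2) * Real.exp (-t)) := by ring
  have hAdd : IntegrableOn
      (fun t : ℝ => ((k:ℝ)+1) * (t ^ k * Real.exp (-t) * Real.log (1 + a * t))
        + t ^ (k+1) * Real.exp (-t) * (a / (1 + a * t))) (Set.Ioi 0) := hIk.add hJ
  rw [integral_sub hAdd hI, integral_add hIk hJ, integral_const_mul] at key
  norm_num at key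
  push_cast
  linarith

lemma I_eq {a : ℝ} (ha : 0 < a) (k : ℕ) :
    ∫ t in Set.Ioi (0:ℝ), t ^ k * Real.exp (-t) * Real.log (1 + a * t)
      = (k.factorial : ℝ) * Real.exp (1/a)
        * ∑ l ∈ Finset.range (k+1), expInt (l+1) (1/a) := by
  induction k with
  | zero =>
    simp only [pow_zero, one_mul, Nat.factorial_zero, Nat.cast_one,
      Finset.sum_range_one, zero_add]
    rw [I_base ha, J_zero ha]
  | succ k ih =>
    rw [I_step ha k, ih, J_eq ha (k+1)]
    conv_rhs => rw [Finset.sum_range_succ]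
    push_cast [Nat.factorial_succ]
    ring

/-- for `a > 0` and integer `c ≥ 1`,
`∫₀^∞ t^{c-1} e^{-t} ln(1+at) dt = Γ(c) e^{1/a} ∑_{l=0}^{c-1} E_{l+1}(1/a)`. -/
theorem stmt_17 (a : ℝ) (ha : 0 < a) (c : ℕ) (hc : 1 ≤ c) :
    ∫ t in Set.Ioi (0 : ℝ), t ^ ((c : ℝ) - 1) * Real.exp (-t) * Real.log (1 + a * t)
      = Real.Gamma c * Real.exp (1 / a) * ∑ l ∈ Finset.range c, expInt (l + 1) (1 / a) := by
  obtain ⟨k, rfl⟩ : ∃ k, c = k + 1 := ⟨c - 1, (Nat.succ_pred_eq_of_pos hc).symm⟩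
  have hcongr : ∀ t ∈ Set.Ioi (0:ℝ),
      t ^ (((k+1:ℕ):ℝ) - 1) * Real.exp (-t) * Real.log (1 + a * t)
        = t ^ k * Real.exp (-t) * Real.log (1 + a * t) := by
    intro t ht
    rw [show (((k+1:ℕ):ℝ) - 1) = (k:ℝ) by push_cast; ring, Real.rpow_natCast]
  rw [setIntegral_congr_fun measurableSet_Ioi hcongr, I_eq ha k,
    show ((k+1:ℕ):ℝ) = (k:ℝ) + 1 by push_cast; ring,
    Real.Gamma_nat_eq_factorial]
end

section
/- (Minkowski-type lower bound) If X is an n×n random positive definite Hermitian matrix with E[ln det X] finite, then E[log₂ det(I + c X)] ≥ n log₂(1 + c · exp((1/n) E[ln det X])) for every c > 0. -/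
open MeasureTheory Real
open scoped ComplexOrder

section Aux

variable {c : ℝ}

lemma aux_hasDerivAt (hc : 0 < c) (t : ℝ) :
    HasDerivAt (fun t => Real.log (1 + c * Real.exp t))
      (c * Real.exp t / (1 + c * Real.exp t)) t := by
  have h : HasDerivAt (fun t => 1 + c * Real.exp t) (c * Real.exp t) t := by
    simpa using ((Real.hasDerivAt_exp t).const_mul c).const_add 1
  exact h.log (by positivity)

lemma aux_hasDerivAt' (hc : 0 < c) (t : ℝ) :
    HasDerivAt (fun t => c * Real.exp t / (1 + c * Real.exp t))
      ((c * Real.exp t * (1 + c * Real.exp t) - c * Real.exp t * (c * Real.exp t)) /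
        (1 + c * Real.exp t) ^ 2) t := by
  have hnum : HasDerivAt (fun t => c * Real.exp t) (c * Real.exp t) t :=
    (Real.hasDerivAt_exp t).const_mul c
  have hden : HasDerivAt (fun t => 1 + c * Real.exp t) (c * Real.exp t) t := by
    simpa using ((Real.hasDerivAt_exp t).const_mul c).const_add 1
  exact hnum.div hden (by positivity)

lemma aux_convex (hc : 0 < c) :
    ConvexOn ℝ Set.univ (fun t => Real.logb 2 (1 + c * Real.exp t)) := by
  have key : ConvexOn ℝ Set.univ (fun t => Real.log (1 + c * Real.exp t)) := by
    have hderiv : deriv (fun t => Real.log (1 + c * Real.exp t)) =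
        fun t => c * Real.exp t / (1 + c * Real.exp t) :=
      funext fun t => (aux_hasDerivAt hc t).deriv
    apply convexOn_univ_of_deriv2_nonneg
    · exact fun t => (aux_hasDerivAt hc t).differentiableAt
    · rw [hderiv]
      exact fun t => (aux_hasDerivAt' hc t).differentiableAt
    · intro x
      have h2 : deriv^[2] (fun t => Real.log (1 + c * Real.exp t)) x =
          (c * Real.exp x * (1 + c * Real.exp x) - c * Real.exp x * (c * Real.exp x)) /
            (1 + c * Real.exp x) ^ 2 := by
        show deriv (deriv (fun t => Real.log (1 + c * Real.exp t))) x = _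
        rw [hderiv]
        exact (aux_hasDerivAt' hc x).deriv
      rw [h2]
      have : c * Real.exp x * (1 + c * Real.exp x) - c * Real.exp x * (c * Real.exp x)
          = c * Real.exp x := by ring
      rw [this]
      positivity
  have heq : (fun t => Real.logb 2 (1 + c * Real.exp t)) =
      (Real.log 2)⁻¹ • (fun t => Real.log (1 + c * Real.exp t)) := by
    funext t
    simp [Real.logb, div_eq_inv_mul, smul_eq_mul]
  rw [heq]
  exact key.smul (by positivity)

lemma aux_continuous (hc : 0 < c) :
    Continuous (fun t => Real.logb 2 (1 + c * Real.exp t)) := by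
  simp only [Real.logb]
  exact ((continuous_const.add (continuous_const.mul Real.continuous_exp)).log
    (fun x => (add_pos one_pos (mul_pos hc (Real.exp_pos x))).ne')).div_const _

lemma aux_det_one_add_smul {n : ℕ} {A : Matrix (Fin n) (Fin n) ℂ} (hA : A.IsHermitian)
    (c : ℝ) :
    ((1 + (c : ℂ) • A).det).re = ∏ i, (1 + c * hA.eigenvalues i) := by
  set U : Matrix (Fin n) (Fin n) ℂ := (hA.eigenvectorUnitary : Matrix (Fin n) (Fin n) ℂ) with hUdef
  have hUU : U * star U = 1 := (Matrix.mem_unitaryGroup_iff).mp hA.eigenvectorUnitary.2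
  have key : (1 : Matrix (Fin n) (Fin n) ℂ) + (c : ℂ) • A =
      U * ((1 : Matrix (Fin n) (Fin n) ℂ) +
        (c : ℂ) • Matrix.diagonal (RCLike.ofReal ∘ hA.eigenvalues)) * star U := by
    rw [mul_add, add_mul, mul_one, hUU, Matrix.mul_smul, Matrix.smul_mul]
    congr 2
    exact hA.spectral_theorem
  have hdiag : (1 : Matrix (Fin n) (Fin n) ℂ) +
      (c : ℂ) • Matrix.diagonal (RCLike.ofReal ∘ hA.eigenvalues) =
      Matrix.diagonal (fun i => ((1 + c * hA.eigenvalues i : ℝ) : ℂ)) := by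
    ext i j
    by_cases h : i = j
    · subst h
      simp only [Matrix.add_apply, Matrix.smul_apply, Matrix.one_apply_eq,
        Matrix.diagonal_apply_eq, Function.comp_apply, smul_eq_mul]
      push_cast
      rfl
    · simp [Matrix.diagonal_apply_ne _ h, Matrix.one_apply_ne h]
  rw [key, Matrix.det_mul_right_comm, hUU, one_mul, hdiag, Matrix.det_diagonal,
    ← Complex.ofReal_prod, Complex.ofReal_re]

lemma aux_det_re {n : ℕ} {A : Matrix (Fin n) (Fin n) ℂ} (hA : A.IsHermitian) :
    A.det.re = ∏ i, hA.eigenvalues i := by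
  rw [hA.det_eq_prod_eigenvalues]
  norm_cast

lemma aux_pointwise {n : ℕ} (hn : 0 < n) {A : Matrix (Fin n) (Fin n) ℂ} (hA : A.PosDef)
    (hc : 0 < c) :
    (n : ℝ) * Real.logb 2 (1 + c * Real.exp ((1 / n) * Real.log A.det.re))
      ≤ Real.logb 2 ((1 + (c : ℂ) • A).det.re) := by
  have hev : ∀ i, 0 < hA.1.eigenvalues i := hA.eigenvalues_pos
  have hnpos : (0 : ℝ) < n := by exact_mod_cast hn
  have hlog : Real.log A.det.re = ∑ i, Real.log (hA.1.eigenvalues i) := by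
    rw [aux_det_re hA.1, Real.log_prod]
    exact fun i _ => (hev i).ne'
  have hrhs : Real.logb 2 ((1 + (c : ℂ) • A).det.re) =
      ∑ i, Real.logb 2 (1 + c * Real.exp (Real.log (hA.1.eigenvalues i))) := by
    rw [aux_det_one_add_smul hA.1 c, Real.logb, Real.log_prod
      (fun i _ => by have := hev i; positivity)]
    rw [Finset.sum_div]
    refine Finset.sum_congr rfl fun i _ => ?_
    rw [Real.exp_log (hev i), Real.logb]
  have jensen := (aux_convex hc).map_sum_le (t := Finset.univ)
    (w := fun _ : Fin n => (1 : ℝ) / n) (p := fun i => Real.log (hA.1.eigenvalues i))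
    (fun i _ => by positivity)
    (by simp [Finset.sum_const]; field_simp)
    (fun i _ => Set.mem_univ _)
  rw [hrhs]
  have hsum : ∑ i : Fin n, ((1 : ℝ) / n) • Real.log (hA.1.eigenvalues i) =
      (1 / n) * Real.log A.det.re := by
    rw [hlog, Finset.mul_sum]
    simp [smul_eq_mul]
  rw [hsum] at jensen
  calc (n : ℝ) * Real.logb 2 (1 + c * Real.exp ((1 / n) * Real.log A.det.re))
      ≤ (n : ℝ) * ∑ i : Fin n, ((1 : ℝ) / n) •
          Real.logb 2 (1 + c * Real.exp (Real.log (hA.1.eigenvalues i))) := by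
        exact mul_le_mul_of_nonneg_left jensen hnpos.le
    _ = ∑ i, Real.logb 2 (1 + c * Real.exp (Real.log (hA.1.eigenvalues i))) := by
        simp only [smul_eq_mul]
        rw [← Finset.mul_sum, ← mul_assoc, mul_one_div_cancel hnpos.ne', one_mul]

end Aux

/-- Minkowski-type lower bound: if `X` is a random `n×n` Hermitian positive
definite complex matrix with `E[ln det X]` finite, then for every `c > 0`,
`E[log₂ det(I + cX)] ≥ n log₂(1 + c exp((1/n) E[ln det X]))`. -/
theorem stmt_19 {Ω : Type*} [MeasurableSpace Ω] (μ : Measure Ω) [IsProbabilityMeasure μ]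
    (n : ℕ) (hn : 0 < n) (X : Ω → Matrix (Fin n) (Fin n) ℂ)
    (hX : ∀ ω, (X ω).PosDef) (c : ℝ) (hc : 0 < c)
    (hint : Integrable (fun ω => Real.log (X ω).det.re) μ)
    (hint' : Integrable (fun ω => Real.logb 2 ((1 + (c : ℂ) • X ω).det.re)) μ) :
    (n : ℝ) * Real.logb 2 (1 + c * Real.exp ((1 / n) * ∫ ω, Real.log (X ω).det.re ∂μ))
      ≤ ∫ ω, Real.logb 2 ((1 + (c : ℂ) • X ω).det.re) ∂μ := by
  have hconv := aux_convex hc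
  set g := fun t => Real.logb 2 (1 + c * Real.exp t) with hg
  set T := fun ω => (1 / (n : ℝ)) * Real.log (X ω).det.re with hT
  have hTint : Integrable T μ := hint.const_mul _
  have hcont : Continuous g := aux_continuous hc
  have hpt : ∀ ω, (n : ℝ) * g (T ω) ≤ Real.logb 2 ((1 + (c : ℂ) • X ω).det.re) :=
    fun ω => aux_pointwise hn (hX ω) hc
  have hg0 : ∀ t, 0 ≤ g t := fun t =>
    Real.logb_nonneg one_lt_two (by nlinarith [Real.exp_pos t, hc])
  have hnpos : (0 : ℝ) < n := by exact_mod_cast hn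
  have hgT : Integrable (fun ω => g (T ω)) μ := by
    refine Integrable.mono' (hint'.const_mul ((n : ℝ)⁻¹))
      (hcont.comp_aestronglyMeasurable hTint.1) ?_
    filter_upwards with ω
    rw [Real.norm_eq_abs, abs_of_nonneg (hg0 _)]
    calc g (T ω) = (n : ℝ)⁻¹ * ((n : ℝ) * g (T ω)) := by field_simp
      _ ≤ (n : ℝ)⁻¹ * Real.logb 2 ((1 + (c : ℂ) • X ω).det.re) :=
          mul_le_mul_of_nonneg_left (hpt ω) (by positivity)
  have jensen : g (∫ ω, T ω ∂μ) ≤ ∫ ω, g (T ω) ∂μ :=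
    hconv.map_integral_le hcont.continuousOn isClosed_univ
      (Filter.Eventually.of_forall fun _ => Set.mem_univ _) hTint hgT
  have hTi : ∫ ω, T ω ∂μ = (1 / (n : ℝ)) * ∫ ω, Real.log (X ω).det.re ∂μ :=
    integral_const_mul _ _
  calc (n : ℝ) * Real.logb 2 (1 + c * Real.exp ((1 / n) * ∫ ω, Real.log (X ω).det.re ∂μ))
      = (n : ℝ) * g (∫ ω, T ω ∂μ) := by rw [hTi]
    _ ≤ (n : ℝ) * ∫ ω, g (T ω) ∂μ := mul_le_mul_of_nonneg_left jensen hnpos.le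
    _ = ∫ ω, (n : ℝ) * g (T ω) ∂μ := (integral_const_mul _ _).symm
    _ ≤ ∫ ω, Real.logb 2 ((1 + (c : ℂ) • X ω).det.re) ∂μ :=
        integral_mono (hgT.const_mul _) hint' hpt
end
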